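/- arXiv:1602.00343 — 2 statements merged into one kernel-verified Lean document; each statement's English description precedes it below -/
import Mathlib

section
/- (Uniform van der Corput lemma.) Let 𝓗 be a Hilbert space and let (u_n^{(t)})_{n ∈ ℕ}, t ∈ I, be a family of sequences in 𝓗 with ‖u_n^{(t)}‖ ≤ 1 for all n and t. Suppose there are nonnegative reals s_h^{(t)} such that: (i) for each h ∈ ℕ and every ε > 0 there is N₀ such that for all N ≥ N₀ and all t ∈ I, |(1/N) ∑_{n=1}^{N} ⟨u_n^{(t)}, u_{n+h}^{(t)}⟩| ≤ s_h^{(t)} + ε; and (ii) (1/H) ∑_{h=1}^{H} s_h^{(t)} → 0 as H → ∞, uniformly in t ∈ I. Then ‖(1/N) ∑_{n=1}^{N} u_n^{(t)}‖ → 0 as N → ∞, uniformly in t ∈ I. -/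
open Filter Finset
open scoped InnerProductSpace

lemma vdc_shift {E : Type*} [SeminormedAddCommGroup E] (f : ℕ → E) {M : ℝ}
    (hf : ∀ m, ‖f m‖ ≤ M) {h N : ℕ} (hhN : h ≤ N) :
    ‖(∑ n ∈ Finset.Ioc 0 N, f (n + h)) - ∑ n ∈ Finset.Ioc 0 N, f n‖ ≤ 2 * h * M := by
  have key : ∀ a b : ℕ, ‖∑ n ∈ Finset.Ioc a b, f n‖ ≤ ((b - a : ℕ) : ℝ) * M := by
    intro a b
    calc ‖∑ n ∈ Finset.Ioc a b, f n‖ ≤ ∑ _n ∈ Finset.Ioc a b, M :=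
          norm_sum_le_of_le _ (fun i _ => hf i)
      _ = ((b - a : ℕ) : ℝ) * M := by rw [Finset.sum_const, Nat.card_Ioc, nsmul_eq_mul]
  have e1 : (∑ n ∈ Finset.Ioc 0 N, f (n + h)) = ∑ m ∈ Finset.Ioc h (N + h), f m := by
    have : Finset.Ioc h (N + h) = (Finset.Ioc 0 N).map (addRightEmbedding h) := by
      rw [Finset.map_add_right_Ioc]; simp
    rw [this, Finset.sum_map]
    rfl
  have e2 := Finset.sum_Ioc_consecutive f (Nat.zero_le h) (by omega : h ≤ N + h)
  have e3 := Finset.sum_Ioc_consecutive f (Nat.zero_le N) (by omega : N ≤ N + h)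
  have e4 : (∑ n ∈ Finset.Ioc 0 N, f (n + h)) - ∑ n ∈ Finset.Ioc 0 N, f n
      = (∑ m ∈ Finset.Ioc N (N + h), f m) - ∑ m ∈ Finset.Ioc 0 h, f m := by
    rw [e1, sub_eq_sub_iff_add_eq_add, add_comm]
    rw [e2, add_comm (∑ m ∈ Finset.Ioc N (N + h), f m)]
    exact e3.symm
  rw [e4]
  calc ‖(∑ m ∈ Finset.Ioc N (N + h), f m) - ∑ m ∈ Finset.Ioc 0 h, f m‖
      ≤ ‖∑ m ∈ Finset.Ioc N (N + h), f m‖ + ‖∑ m ∈ Finset.Ioc 0 h, f m‖ := norm_sub_le _ _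
    _ ≤ ((N + h - N : ℕ) : ℝ) * M + ((h - 0 : ℕ) : ℝ) * M := add_le_add (key _ _) (key _ _)
    _ = 2 * h * M := by simp; ring

lemma vdc_img (s : ℕ → ℝ) (hs : ∀ d, 0 ≤ s d) {Hn : ℕ} (A : Finset ℕ) (g : ℕ → ℕ)
    (hinj : ∀ x ∈ A, ∀ y ∈ A, g x = g y → x = y) (hsub : ∀ x ∈ A, g x ∈ Finset.Icc 1 Hn) :
    ∑ x ∈ A, s (g x) ≤ ∑ d ∈ Finset.Icc 1 Hn, s d := by
  rw [← Finset.sum_image hinj]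
  exact Finset.sum_le_sum_of_subset_of_nonneg (Finset.image_subset_iff.2 hsub)
    (fun i _ _ => hs i)

lemma vdc_comb (s : ℕ → ℝ) (hs : ∀ d, 0 ≤ s d) {Hn h : ℕ} (hh : h ∈ Finset.Ioc 0 Hn) :
    ∑ h' ∈ (Finset.Ioc 0 Hn).erase h, s ((h' - h) + (h - h'))
      ≤ 2 * ∑ d ∈ Finset.Icc 1 Hn, s d := by
  classical
  rw [Finset.mem_Ioc] at hh
  rw [← Finset.sum_filter_add_sum_filter_not ((Finset.Ioc 0 Hn).erase h) (· < h)]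
  have b1 : ∑ h' ∈ ((Finset.Ioc 0 Hn).erase h).filter (· < h), s ((h' - h) + (h - h'))
      ≤ ∑ d ∈ Finset.Icc 1 Hn, s d := by
    refine vdc_img s hs _ (fun h' => (h' - h) + (h - h')) ?_ ?_
    · intro x hx y hy hxy
      simp only [Finset.mem_filter, Finset.mem_erase, Finset.mem_Ioc] at hx hy
      omega
    · intro x hx
      simp only [Finset.mem_filter, Finset.mem_erase, Finset.mem_Ioc] at hx
      rw [Finset.mem_Icc]
      omega
  have b2 : ∑ h' ∈ ((Finset.Ioc 0 Hn).erase h).filter (fun x => ¬ x < h),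
      s ((h' - h) + (h - h')) ≤ ∑ d ∈ Finset.Icc 1 Hn, s d := by
    refine vdc_img s hs _ (fun h' => (h' - h) + (h - h')) ?_ ?_
    · intro x hx y hy hxy
      simp only [Finset.mem_filter, Finset.mem_erase, Finset.mem_Ioc] at hx hy
      omega
    · intro x hx
      simp only [Finset.mem_filter, Finset.mem_erase, Finset.mem_Ioc] at hx
      rw [Finset.mem_Icc]
      omega
  linarith


set_option maxHeartbeats 1000000 in
/-- Uniform van der Corput lemma: if the correlation averages of a uniformly bounded family
of sequences `(u_n^{(t)})` in a Hilbert space are, uniformly in `t`, eventually bounded by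
`s_h^{(t)}`, and the averages of `s_h^{(t)}` tend to `0` uniformly in `t`, then the averages
`(1/N) ∑_{n=1}^N u_n^{(t)}` tend to `0` uniformly in `t`. -/
theorem stmt5 {𝕜 H : Type*} [RCLike 𝕜] [NormedAddCommGroup H] [InnerProductSpace 𝕜 H]
    [CompleteSpace H] {I : Type*}
    (u : ℕ → I → H) (hu : ∀ n t, ‖u n t‖ ≤ 1)
    (s : ℕ → I → ℝ) (hs : ∀ h t, 0 ≤ s h t)
    (hcorr : ∀ h : ℕ, ∀ ε : ℝ, 0 < ε → ∃ N₀ : ℕ, ∀ N : ℕ, N ≥ N₀ → ∀ t : I,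
      ‖(N : 𝕜)⁻¹ * ∑ n ∈ Finset.Icc 1 N, (⟪u n t, u (n + h) t⟫_𝕜)‖ ≤ s h t + ε)
    (havg : ∀ ε : ℝ, 0 < ε → ∃ H₀ : ℕ, ∀ Hh : ℕ, Hh ≥ H₀ → ∀ t : I,
      (Hh : ℝ)⁻¹ * ∑ h ∈ Finset.Icc 1 Hh, s h t < ε) :
    ∀ ε : ℝ, 0 < ε → ∃ N₀ : ℕ, ∀ N : ℕ, N ≥ N₀ → ∀ t : I,
      ‖(N : 𝕜)⁻¹ • ∑ n ∈ Finset.Icc 1 N, u n t‖ < ε := by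
  classical
  intro ε hε
  obtain ⟨δ, hδpos, hδ1, hδ2⟩ : ∃ δ : ℝ, 0 < δ ∧ δ ≤ ε / 4 ∧ δ ≤ ε ^ 2 / 20 :=
    ⟨min (ε / 4) (ε ^ 2 / 20), by positivity, min_le_left _ _, min_le_right _ _⟩
  obtain ⟨H₀, hH₀⟩ := havg δ hδpos
  obtain ⟨Hn, hHn1, hHnH₀, hHnceil⟩ :
      ∃ Hn : ℕ, 1 ≤ Hn ∧ H₀ ≤ Hn ∧ ⌈1 / δ⌉₊ ≤ Hn :=
    ⟨max (max H₀ 1) ⌈1 / δ⌉₊ + 1, by omega, by omega, by omega⟩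
  have hHnR : (1 : ℝ) ≤ (Hn : ℝ) := by exact_mod_cast hHn1
  have hHnpos : (0 : ℝ) < (Hn : ℝ) := by linarith
  have h1δHn : 1 ≤ δ * (Hn : ℝ) := by
    have h1 : (1 : ℝ) / δ ≤ (⌈1 / δ⌉₊ : ℝ) := Nat.le_ceil _
    have h2 : ((⌈1 / δ⌉₊ : ℕ) : ℝ) ≤ (Hn : ℝ) := by exact_mod_cast hHnceil
    rw [div_le_iff₀ hδpos] at h1
    nlinarith
  choose Nc hNc using fun d => hcorr d δ hδpos
  refine ⟨max (max ((Finset.Icc 1 Hn).sup Nc) Hn) (⌈2 * (Hn : ℝ) / δ⌉₊ + 1),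
    fun N hN t => ?_⟩
  have hNHn : Hn ≤ N := le_trans (le_trans (le_max_right _ _) (le_max_left _ _)) hN
  have hNsup : (Finset.Icc 1 Hn).sup Nc ≤ N :=
    le_trans (le_trans (le_max_left _ _) (le_max_left _ _)) hN
  have hNceil : ⌈2 * (Hn : ℝ) / δ⌉₊ + 1 ≤ N := le_trans (le_max_right _ _) hN
  have hNpos : 0 < N := by omega
  have hNR : (0 : ℝ) < (N : ℝ) := by exact_mod_cast hNpos
  have hmn : (Hn : ℝ) ≤ (N : ℝ) := by exact_mod_cast hNHn
  have h2mn : 2 * (Hn : ℝ) ≤ δ * (N : ℝ) := by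
    have h1 : 2 * (Hn : ℝ) / δ ≤ (⌈2 * (Hn : ℝ) / δ⌉₊ : ℝ) := Nat.le_ceil _
    have h2 : ((⌈2 * (Hn : ℝ) / δ⌉₊ : ℕ) : ℝ) ≤ (N : ℝ) := by
      exact_mod_cast (by omega : ⌈2 * (Hn : ℝ) / δ⌉₊ ≤ N)
    rw [div_le_iff₀ hδpos] at h1
    nlinarith
  have hSig : ∑ d ∈ Finset.Icc 1 Hn, s d t < (Hn : ℝ) * δ := by
    have h1 := hH₀ Hn hHnH₀ t
    have h2 := mul_lt_mul_of_pos_left h1 hHnpos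
    rwa [← mul_assoc, mul_inv_cancel₀ (ne_of_gt hHnpos), one_mul] at h2
  have hSig0 : 0 ≤ ∑ d ∈ Finset.Icc 1 Hn, s d t :=
    Finset.sum_nonneg (fun d _ => hs d t)
  have hIcc : Finset.Icc 1 N = Finset.Ioc 0 N := Finset.Icc_add_one_left_eq_Ioc 0 N
  rw [hIcc]
  set P := ∑ n ∈ Finset.Ioc 0 N, u n t with hP
  set W : ℕ → H := fun n => ∑ h ∈ Finset.Ioc 0 Hn, u (n + h) t with hW
  set T := ∑ n ∈ Finset.Ioc 0 N, ‖W n‖ with hTdef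
  set C : ℕ → ℕ → 𝕜 :=
    fun h h' => ∑ n ∈ Finset.Ioc 0 N, (⟪u (n + h) t, u (n + h') t⟫_𝕜) with hCdef
  -- Step A
  have stepA : (Hn : ℝ) * ‖P‖ ≤
      ‖∑ h ∈ Finset.Ioc 0 Hn, ∑ n ∈ Finset.Ioc 0 N, u (n + h) t‖ + 2 * (Hn : ℝ) ^ 2 := by
    set B := ∑ h ∈ Finset.Ioc 0 Hn, ∑ n ∈ Finset.Ioc 0 N, u (n + h) t with hB
    have e : Hn • P - B = ∑ h ∈ Finset.Ioc 0 Hn, (P - ∑ n ∈ Finset.Ioc 0 N, u (n + h) t) := by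
      rw [Finset.sum_sub_distrib, Finset.sum_const, Nat.card_Ioc, Nat.sub_zero, hB]
    have hnorm : ‖Hn • P - B‖ ≤ 2 * (Hn : ℝ) ^ 2 := by
      rw [e]
      calc ‖∑ h ∈ Finset.Ioc 0 Hn, (P - ∑ n ∈ Finset.Ioc 0 N, u (n + h) t)‖
          ≤ ∑ _h ∈ Finset.Ioc 0 Hn, (2 * (Hn : ℝ)) := by
            refine norm_sum_le_of_le _ (fun h hh => ?_)
            rw [Finset.mem_Ioc] at hh
            rw [norm_sub_rev]
            have hb := vdc_shift (fun m => u m t) (M := 1) (fun m => hu m t)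
              (le_trans hh.2 hNHn)
            refine le_trans hb ?_
            have : (h : ℝ) ≤ (Hn : ℝ) := by exact_mod_cast hh.2
            nlinarith
        _ = (Hn : ℝ) * (2 * (Hn : ℝ)) := by
            rw [Finset.sum_const, Nat.card_Ioc, Nat.sub_zero, nsmul_eq_mul]
        _ = 2 * (Hn : ℝ) ^ 2 := by ring
    have hn1 : ‖Hn • P‖ = (Hn : ℝ) * ‖P‖ := by
      rw [← Nat.cast_smul_eq_nsmul 𝕜 Hn P, norm_smul, RCLike.norm_natCast]
    calc (Hn : ℝ) * ‖P‖ = ‖Hn • P‖ := hn1.symm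
      _ ≤ ‖B‖ + ‖Hn • P - B‖ := norm_le_norm_add_norm_sub' _ _
      _ ≤ ‖B‖ + 2 * (Hn : ℝ) ^ 2 := by linarith
  -- Step B
  have stepB : ‖∑ h ∈ Finset.Ioc 0 Hn, ∑ n ∈ Finset.Ioc 0 N, u (n + h) t‖ ≤ T := by
    rw [Finset.sum_comm]
    exact norm_sum_le _ _
  -- Step C
  have stepC : T ^ 2 ≤ (N : ℝ) * ∑ n ∈ Finset.Ioc 0 N, ‖W n‖ ^ 2 := by
    have h1 := sq_sum_le_card_mul_sum_sq (s := Finset.Ioc 0 N) (f := fun n => ‖W n‖)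
    simpa [Nat.card_Ioc] using h1
  -- Step D1
  have stepD1 : ∑ n ∈ Finset.Ioc 0 N, ‖W n‖ ^ 2 ≤
      ∑ h ∈ Finset.Ioc 0 Hn, ∑ h' ∈ Finset.Ioc 0 Hn, ‖C h h'‖ := by
    have e1 : ∑ n ∈ Finset.Ioc 0 N, ‖W n‖ ^ 2
        = RCLike.re (∑ n ∈ Finset.Ioc 0 N, (⟪W n, W n⟫_𝕜)) := by
      rw [map_sum]
      exact Finset.sum_congr rfl fun n _ => (inner_self_eq_norm_sq (𝕜 := 𝕜) (W n)).symm
    have e2 : ∑ n ∈ Finset.Ioc 0 N, (⟪W n, W n⟫_𝕜)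
        = ∑ h ∈ Finset.Ioc 0 Hn, ∑ h' ∈ Finset.Ioc 0 Hn, C h h' := by
      have e3 : ∀ n, (⟪W n, W n⟫_𝕜)
          = ∑ h ∈ Finset.Ioc 0 Hn, ∑ h' ∈ Finset.Ioc 0 Hn,
              (⟪u (n + h) t, u (n + h') t⟫_𝕜) := by
        intro n
        simp only [hW]
        rw [sum_inner]
        exact Finset.sum_congr rfl fun h _ => inner_sum _ _ _
      rw [Finset.sum_congr rfl fun n _ => e3 n]
      simp only [hCdef]
      rw [Finset.sum_comm]
      refine Finset.sum_congr rfl fun h _ => ?_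
      rw [Finset.sum_comm]
    rw [e1, e2]
    refine le_trans (RCLike.re_le_norm _) ?_
    exact le_trans (norm_sum_le _ _) (Finset.sum_le_sum fun h _ => norm_sum_le _ _)
  -- pairwise bound
  have hpair : ∀ h ∈ Finset.Ioc 0 Hn, ∀ h' ∈ Finset.Ioc 0 Hn, h ≠ h' →
      ‖C h h'‖ ≤ (N : ℝ) * (s ((h' - h) + (h - h')) t + δ) + 2 * (Hn : ℝ) := by
    have core : ∀ h h', 0 < h → h < h' → h' ≤ Hn →
        ‖C h h'‖ ≤ (N : ℝ) * (s (h' - h) t + δ) + 2 * (Hn : ℝ) := by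
      intro h h' h0 hlt hle
      set d := h' - h with hd
      have hd1 : 1 ≤ d := by omega
      have hdHn : d ≤ Hn := by omega
      set c : ℕ → 𝕜 := fun m => (⟪u m t, u (m + d) t⟫_𝕜) with hc
      have hcbd : ∀ m, ‖c m‖ ≤ 1 := by
        intro m
        refine le_trans (norm_inner_le_norm _ _) ?_
        have h1 := hu m t; have h2 := hu (m + d) t
        have h3 := norm_nonneg (u m t)
        nlinarith
      have hCeq : C h h' = ∑ n ∈ Finset.Ioc 0 N, c (n + h) := by
        simp only [hCdef, hc]
        refine Finset.sum_congr rfl fun n _ => ?_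
        have hnn : n + h' = n + h + d := by omega
        rw [hnn]
      have hshift := vdc_shift c (M := 1) hcbd
        (le_trans (le_trans (le_of_lt hlt) hle) hNHn : h ≤ N)
      have hmain : ‖∑ n ∈ Finset.Ioc 0 N, c n‖ ≤ (N : ℝ) * (s d t + δ) := by
        have h1 := hNc d N (le_trans (Finset.le_sup (Finset.mem_Icc.2 ⟨hd1, hdHn⟩)) hNsup) t
        rw [hIcc] at h1
        have h2 : ‖∑ n ∈ Finset.Ioc 0 N, c n‖
            = (N : ℝ) * ‖(N : 𝕜)⁻¹ * ∑ n ∈ Finset.Ioc 0 N, c n‖ := by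
          rw [norm_mul, norm_inv, RCLike.norm_natCast, ← mul_assoc,
            mul_inv_cancel₀ (ne_of_gt hNR), one_mul]
        rw [h2]
        exact mul_le_mul_of_nonneg_left h1 (le_of_lt hNR)
      have hhHn : (h : ℝ) ≤ (Hn : ℝ) := by
        exact_mod_cast (by omega : h ≤ Hn)
      calc ‖C h h'‖
          = ‖((∑ n ∈ Finset.Ioc 0 N, c (n + h)) - ∑ n ∈ Finset.Ioc 0 N, c n)
              + ∑ n ∈ Finset.Ioc 0 N, c n‖ := by rw [hCeq, sub_add_cancel]
        _ ≤ ‖(∑ n ∈ Finset.Ioc 0 N, c (n + h)) - ∑ n ∈ Finset.Ioc 0 N, c n‖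
              + ‖∑ n ∈ Finset.Ioc 0 N, c n‖ := norm_add_le _ _
        _ ≤ 2 * (h : ℝ) * 1 + (N : ℝ) * (s d t + δ) := add_le_add hshift hmain
        _ ≤ (N : ℝ) * (s d t + δ) + 2 * (Hn : ℝ) := by nlinarith
    intro h hh h' hh' hne
    rw [Finset.mem_Ioc] at hh hh'
    rcases lt_or_gt_of_ne hne with hlt | hgt
    · have h1 := core h h' hh.1 hlt hh'.2
      have h2 : (h' - h) + (h - h') = h' - h := by omega
      rw [h2]; exact h1
    · have hsym : ‖C h h'‖ = ‖C h' h‖ := by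
        have he : C h h' = (starRingEnd 𝕜) (C h' h) := by
          simp only [hCdef, map_sum]
          exact Finset.sum_congr rfl fun n _ => (inner_conj_symm _ _).symm
        rw [he, RCLike.norm_conj]
      have h1 := core h' h hh'.1 hgt hh.2
      have h2 : (h' - h) + (h - h') = h - h' := by omega
      rw [h2, hsym]; exact h1
  -- row bound
  have hrow : ∀ h ∈ Finset.Ioc 0 Hn, ∑ h' ∈ Finset.Ioc 0 Hn, ‖C h h'‖ ≤
      (N : ℝ) + ((N : ℝ) * (2 * ∑ d ∈ Finset.Icc 1 Hn, s d t)
        + (Hn : ℝ) * ((N : ℝ) * δ + 2 * (Hn : ℝ))) := by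
    intro h hh
    rw [← Finset.add_sum_erase _ _ hh]
    refine add_le_add ?_ ?_
    · calc ‖C h h‖ ≤ ∑ _n ∈ Finset.Ioc 0 N, (1 : ℝ) := by
            refine norm_sum_le_of_le _ (fun n _ => ?_)
            refine le_trans (norm_inner_le_norm _ _) ?_
            have h1 := hu (n + h) t
            have h3 := norm_nonneg (u (n + h) t)
            nlinarith
        _ = (N : ℝ) := by
            rw [Finset.sum_const, Nat.card_Ioc, Nat.sub_zero, nsmul_eq_mul, mul_one]
    · calc ∑ h' ∈ (Finset.Ioc 0 Hn).erase h, ‖C h h'‖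
          ≤ ∑ h' ∈ (Finset.Ioc 0 Hn).erase h,
              ((N : ℝ) * s ((h' - h) + (h - h')) t + ((N : ℝ) * δ + 2 * (Hn : ℝ))) := by
            refine Finset.sum_le_sum fun h' hh' => ?_
            have h1 := hpair h hh h' (Finset.mem_of_mem_erase hh')
              (Ne.symm (Finset.ne_of_mem_erase hh'))
            nlinarith [h1]
        _ = (N : ℝ) * ∑ h' ∈ (Finset.Ioc 0 Hn).erase h, s ((h' - h) + (h - h')) t
              + ((Finset.Ioc 0 Hn).erase h).card * ((N : ℝ) * δ + 2 * (Hn : ℝ)) := by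
            rw [Finset.sum_add_distrib, Finset.mul_sum, Finset.sum_const, nsmul_eq_mul]
        _ ≤ (N : ℝ) * (2 * ∑ d ∈ Finset.Icc 1 Hn, s d t)
              + (Hn : ℝ) * ((N : ℝ) * δ + 2 * (Hn : ℝ)) := by
            refine add_le_add ?_ ?_
            · exact mul_le_mul_of_nonneg_left
                (vdc_comb (fun d => s d t) (fun d => hs d t) hh) (le_of_lt hNR)
            · refine mul_le_mul_of_nonneg_right ?_ (by positivity)
              have hcard : ((Finset.Ioc 0 Hn).erase h).card ≤ Hn := by
                refine le_trans (Finset.card_erase_le) ?_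
                rw [Nat.card_Ioc, Nat.sub_zero]
              exact_mod_cast hcard
  -- combine D
  have stepD : ∑ n ∈ Finset.Ioc 0 N, ‖W n‖ ^ 2 ≤
      (Hn : ℝ) * ((N : ℝ) + ((N : ℝ) * (2 * ∑ d ∈ Finset.Icc 1 Hn, s d t)
        + (Hn : ℝ) * ((N : ℝ) * δ + 2 * (Hn : ℝ)))) := by
    refine le_trans stepD1 ?_
    calc ∑ h ∈ Finset.Ioc 0 Hn, ∑ h' ∈ Finset.Ioc 0 Hn, ‖C h h'‖
        ≤ ∑ _h ∈ Finset.Ioc 0 Hn, ((N : ℝ) + ((N : ℝ) * (2 * ∑ d ∈ Finset.Icc 1 Hn, s d t)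
            + (Hn : ℝ) * ((N : ℝ) * δ + 2 * (Hn : ℝ)))) := Finset.sum_le_sum hrow
      _ = _ := by rw [Finset.sum_const, Nat.card_Ioc, Nat.sub_zero, nsmul_eq_mul]
  -- final arithmetic
  have hT0 : 0 ≤ T := Finset.sum_nonneg fun n _ => norm_nonneg _
  have k0 := le_trans stepC (mul_le_mul_of_nonneg_left stepD (le_of_lt hNR))
  have a1 := mul_le_mul_of_nonneg_left hSig.le
    (by positivity : (0 : ℝ) ≤ 2 * (N : ℝ) ^ 2 * (Hn : ℝ))
  have a2 := mul_le_mul_of_nonneg_left h1δHn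
    (by positivity : (0 : ℝ) ≤ (N : ℝ) ^ 2 * (Hn : ℝ))
  have a3 := mul_le_mul_of_nonneg_left h2mn
    (by positivity : (0 : ℝ) ≤ (N : ℝ) * (Hn : ℝ) ^ 2)
  have a4 := mul_le_mul_of_nonneg_left hδ2
    (by positivity : (0 : ℝ) ≤ 5 * (N : ℝ) ^ 2 * (Hn : ℝ) ^ 2)
  have hT2 : T ^ 2 ≤ (ε / 2 * ((N : ℝ) * (Hn : ℝ))) ^ 2 := by nlinarith [k0, a1, a2, a3, a4]
  have hTle : T ≤ ε / 2 * ((N : ℝ) * (Hn : ℝ)) := by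
    have hY : (0 : ℝ) < ε / 2 * ((N : ℝ) * (Hn : ℝ)) := by positivity
    nlinarith [hT2, hT0, hY]
  have k1 := le_trans stepA (add_le_add_left stepB _)
  have b1 := mul_le_mul_of_nonneg_left h2mn (le_of_lt hHnpos)
  have b2 := mul_le_mul_of_nonneg_left hδ1
    (by positivity : (0 : ℝ) ≤ (N : ℝ) * (Hn : ℝ))
  have hPmul : (Hn : ℝ) * ‖P‖ < ε * (N : ℝ) * (Hn : ℝ) := by
    nlinarith [k1, hTle, b1, b2, mul_pos (mul_pos hε hNR) hHnpos]
  have hPfin : ‖P‖ < ε * (N : ℝ) := by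
    nlinarith [hPmul, norm_nonneg P, mul_nonneg (sub_nonneg.2 hHnR) (norm_nonneg P),
      mul_pos hε hNR, mul_nonneg (mul_nonneg hε.le hNR.le) (sub_nonneg.2 hHnR)]
  rw [norm_smul, norm_inv, RCLike.norm_natCast, inv_mul_eq_div, div_lt_iff₀ hNR]
  linarith [hPfin]
end

section
/- If 𝒜 ⊆ ℕ is a weakly mixing set and 𝒵 ⊆ ℕ has density 0, then 𝒜 ∖ 𝒵 is a weakly mixing set. -/
open Filter MeasureTheory Finset
open scoped Classical

/-- The shift space `Ω = {0,1}^ℕ`. -/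
abbrev Omega : Type := ℕ → Bool

/-- The shift map `(Sx)(i) = x(i+1)`. -/
def shift (x : Omega) : Omega := fun i => x (i + 1)

/-- The indicator sequence `1_A ∈ Ω` of a set `A ⊆ ℕ`. -/
noncomputable def indSeq (A : Set ℕ) : Omega := fun n => decide (n ∈ A)

/-- The orbit closure `X_A` of `1_A` under the shift. -/
noncomputable def orbitClosure (A : Set ℕ) : Set Omega :=
  closure {x : Omega | ∃ n : ℕ, x = shift^[n] (indSeq A)}

/-- `|B ∩ [1,N]|`. -/
noncomputable def natCount (B : Set ℕ) (N : ℕ) : ℕ :=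
  ((Finset.Icc 1 N).filter (fun n => n ∈ B)).card

/-- `B` has density `d`: `|B ∩ [1,N]|/N → d`. -/
def HasDensity (B : Set ℕ) (d : ℝ) : Prop :=
  Tendsto (fun N : ℕ => (natCount B N : ℝ) / N) atTop (nhds d)

/-- The upper density of `B ⊆ ℕ`. -/
noncomputable def upperDensity (B : Set ℕ) : ℝ :=
  Filter.limsup (fun N : ℕ => (natCount B N : ℝ) / N) atTop

/-- `A ⊆ ℕ` is a weakly mixing set: it has positive upper density, `1_A` is generic
for an `S`-invariant ergodic Borel probability measure `μ` supported on `X_A`,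
and the resulting system is weakly mixing. -/
def WeaklyMixingSet (A : Set ℕ) : Prop :=
  0 < upperDensity A ∧
  ∃ μ : Measure Omega, IsProbabilityMeasure μ ∧ MeasurePreserving shift μ μ ∧
    μ (orbitClosure A) = 1 ∧ Ergodic shift μ ∧
    (∀ f : C(Omega, ℝ), Tendsto
      (fun N : ℕ => (N : ℝ)⁻¹ * ∑ n ∈ Finset.Icc 1 N, f (shift^[n] (indSeq A)))
      atTop (nhds (∫ x, f x ∂μ))) ∧
    (∀ A' B' : Set Omega, MeasurableSet A' → MeasurableSet B' →
      Tendsto (fun N : ℕ => (N : ℝ)⁻¹ * ∑ n ∈ Finset.Icc 1 N,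
        |(μ (A' ∩ shift^[n] ⁻¹' B')).toReal - (μ A').toReal * (μ B').toReal|)
        atTop (nhds 0))


open scoped Uniformity Topology

section Helpers

lemma shift_iter (x : Omega) : ∀ n i, shift^[n] x i = x (i + n) := by
  intro n
  induction n with
  | zero => simp
  | succ n ih =>
    intro i
    rw [Function.iterate_succ_apply']
    show (shift^[n] x) (i+1) = _
    rw [ih]; ring_nf

lemma indSeq_diff (A Z : Set ℕ) {m : ℕ} (hm : m ∉ Z) : indSeq (A \ Z) m = indSeq A m := by
  simp [indSeq, Set.mem_diff, hm]

lemma natCount_le (B : Set ℕ) (N : ℕ) : natCount B N ≤ N := by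
  have := Finset.card_filter_le (Finset.Icc 1 N) (fun n => n ∈ B)
  simpa [natCount, Nat.card_Icc] using this

lemma natCount_tri (A Z : Set ℕ) (N : ℕ) :
    natCount A N ≤ natCount (A \ Z) N + natCount Z N := by
  have hsub : (Finset.Icc 1 N).filter (fun n => n ∈ A) ⊆
      ((Finset.Icc 1 N).filter (fun n => n ∈ A \ Z)) ∪ ((Finset.Icc 1 N).filter (fun n => n ∈ Z)) := by
    intro n hn
    simp only [Finset.mem_filter, Finset.mem_union, Set.mem_diff] at *
    tauto
  have h2 := Finset.card_union_le ((Finset.Icc 1 N).filter (fun n => n ∈ A \ Z))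
    ((Finset.Icc 1 N).filter (fun n => n ∈ Z))
  refine (Finset.card_le_card hsub).trans (h2.trans (le_of_eq ?_))
  unfold natCount
  congr

lemma badcount (Z : Set ℕ) (k N : ℕ) :
    ((Finset.Icc 1 N).filter (fun n => ∃ j < k, n + j ∈ Z)).card ≤ k * natCount Z (N + k) := by
  classical
  have hsub : (Finset.Icc 1 N).filter (fun n => ∃ j < k, n + j ∈ Z) ⊆
      (Finset.range k).biUnion (fun j => (Finset.Icc 1 N).filter (fun n => n + j ∈ Z)) := by
    intro n hn
    simp only [Finset.mem_filter, Finset.mem_biUnion, Finset.mem_range] at *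
    obtain ⟨h1, j, hj, hz⟩ := hn
    exact ⟨j, hj, h1, hz⟩
  refine (Finset.card_le_card hsub).trans ?_
  refine (Finset.card_biUnion_le).trans ?_
  have hone : ∀ j ∈ Finset.range k,
      ((Finset.Icc 1 N).filter (fun n => n + j ∈ Z)).card ≤ natCount Z (N + k) := by
    intro j hj
    rw [Finset.mem_range] at hj
    unfold natCount
    apply Finset.card_le_card_of_injOn (fun n => n + j)
    · intro n hn
      simp only [Finset.mem_coe, Finset.mem_filter, Finset.mem_Icc] at *
      exact ⟨⟨by omega, by omega⟩, hn.2⟩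
    · intro a _ b _ h
      simpa using h
  refine (Finset.sum_le_sum hone).trans ?_
  simp [Finset.sum_const, mul_comm]

lemma unif_lemma (f : C(Omega, ℝ)) {ε : ℝ} (hε : 0 < ε) :
    ∃ k : ℕ, ∀ x y : Omega, (∀ i < k, x i = y i) → |f x - f y| ≤ ε := by
  have hf : UniformContinuous f := CompactSpace.uniformContinuous_of_continuous f.continuous
  have hU : ((fun p : Omega × Omega => (f p.1, f p.2)) ⁻¹' {q : ℝ × ℝ | dist q.1 q.2 < ε})
      ∈ 𝓤 Omega := hf (Metric.dist_mem_uniformity hε)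
  rw [Pi.uniformity, Filter.mem_iInf'] at hU
  obtain ⟨I, Ifin, V, hV, -, hUeq, -⟩ := hU
  -- each V i contains the set of pairs agreeing at i
  have hVi : ∀ i, ∀ p : Omega × Omega, p.1 i = p.2 i → p ∈ V i := by
    intro i p hp
    have := hV i
    rw [Filter.mem_comap] at this
    obtain ⟨t, ht, hsub⟩ := this
    have hid : SetRel.id ⊆ t := by
      have : (𝓤 Bool) = Filter.principal SetRel.id := rfl
      rw [this, Filter.mem_principal] at ht
      exact ht
    exact hsub (by exact hid (by simpa [SetRel.id] using hp))
  obtain ⟨k, hk⟩ : ∃ k : ℕ, ∀ i ∈ I, i < k := by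
    refine ⟨Ifin.toFinset.sup id + 1, fun i hi => ?_⟩
    have : i ≤ Ifin.toFinset.sup id := Finset.le_sup (f := id) (Ifin.mem_toFinset.2 hi)
    omega
  refine ⟨k, fun x y hxy => ?_⟩
  have hmem : (x, y) ∈ ⋂ i ∈ I, V i := by
    simp only [Set.mem_iInter]
    intro i hi
    exact hVi i (x, y) (hxy i (hk i hi))
  rw [← hUeq] at hmem
  have : dist (f x) (f y) < ε := hmem
  rw [Real.dist_eq] at this
  exact this.le

lemma shifted_density (Z : Set ℕ) (hZ : HasDensity Z 0) (k : ℕ) :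
    Tendsto (fun N : ℕ => (natCount Z (N + k) : ℝ) / N) atTop (nhds 0) := by
  have h1 : Tendsto (fun N : ℕ => (natCount Z (N + k) : ℝ) / (N + k)) atTop (nhds 0) := by
    have := hZ.comp (tendsto_add_atTop_nat k)
    refine this.congr fun N => ?_
    simp [Function.comp]
  have h2 : Tendsto (fun N : ℕ => ((N : ℝ) + k) / N) atTop (nhds 1) := by
    have hz : Tendsto (fun N : ℕ => (k : ℝ) / N) atTop (nhds 0) :=
      tendsto_const_div_atTop_nhds_zero_nat (k : ℝ)
    have := (tendsto_const_nhds (x := (1:ℝ)) (f := atTop)).add hz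
    rw [add_zero] at this
    refine this.congr' ?_
    filter_upwards [eventually_ge_atTop 1] with N hN
    have hN0 : (N : ℝ) ≠ 0 := by positivity
    field_simp
  have := h1.mul h2
  rw [zero_mul] at this
  refine this.congr' ?_
  filter_upwards [eventually_ge_atTop 1] with N hN
  have hN0 : (N : ℝ) ≠ 0 := by positivity
  have hNk0 : (N : ℝ) + k ≠ 0 := by positivity
  field_simp

lemma avg_diff (A Z : Set ℕ) (hZ : HasDensity Z 0) (f : C(Omega, ℝ)) :
    Tendsto (fun N : ℕ => (N : ℝ)⁻¹ * ∑ n ∈ Finset.Icc 1 N,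
      (f (shift^[n] (indSeq (A \ Z))) - f (shift^[n] (indSeq A)))) atTop (nhds 0) := by
  rw [NormedAddCommGroup.tendsto_nhds_zero]
  intro ε hε
  set ε' : ℝ := ε / 4 with hε'def
  have hε' : 0 < ε' := by positivity
  obtain ⟨k, hk⟩ := unif_lemma f hε'
  set M : ℝ := ‖BoundedContinuousFunction.mkOfCompact f‖ with hMdef
  have hMb : ∀ x : Omega, |f x| ≤ M := fun x => by
    simpa [Real.norm_eq_abs, hMdef] using (BoundedContinuousFunction.mkOfCompact f).norm_coe_le_norm x
  have hM0 : 0 ≤ M := norm_nonneg _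
  have hcount : Tendsto (fun N : ℕ => (2 * M * k) * ((natCount Z (N + k) : ℝ) / N))
      atTop (nhds 0) := by
    have := (tendsto_const_nhds (x := 2 * M * (k:ℝ)) (f := atTop)).mul (shifted_density Z hZ k)
    rwa [mul_zero] at this
  filter_upwards [hcount.eventually_lt_const hε', eventually_ge_atTop 1] with N hN hN1
  have hN0 : (0:ℝ) < (N:ℝ) := by exact_mod_cast hN1
  set x' := indSeq (A \ Z)
  set x := indSeq A
  set bad : ℕ → Prop := fun n => ∃ j < k, n + j ∈ Z with hbaddef
  have hterm : ∀ n ∈ Finset.Icc 1 N,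
      |f (shift^[n] x') - f (shift^[n] x)| ≤ if bad n then 2 * M else ε' := by
    intro n _
    split_ifs with hb
    · calc |f (shift^[n] x') - f (shift^[n] x)| ≤ |f (shift^[n] x')| + |f (shift^[n] x)| :=
        abs_sub _ _
      _ ≤ 2 * M := by have := hMb (shift^[n] x'); have := hMb (shift^[n] x); linarith
    · apply hk
      intro i hi
      rw [shift_iter, shift_iter]
      apply indSeq_diff
      intro hmem
      exact hb ⟨i, hi, by rwa [add_comm n i]⟩
  have hsum : |∑ n ∈ Finset.Icc 1 N, (f (shift^[n] x') - f (shift^[n] x))| ≤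
      2 * M * (k * natCount Z (N + k)) + N * ε' := by
    refine (Finset.abs_sum_le_sum_abs _ _).trans ?_
    refine (Finset.sum_le_sum hterm).trans ?_
    rw [Finset.sum_ite]
    have c1 : ((Finset.Icc 1 N).filter bad).card ≤ k * natCount Z (N + k) := badcount Z k N
    have c2 : ((Finset.Icc 1 N).filter (fun n => ¬ bad n)).card ≤ N := by
      refine (Finset.card_filter_le _ _).trans ?_
      simp [Nat.card_Icc]
    rw [Finset.sum_const, Finset.sum_const, nsmul_eq_mul, nsmul_eq_mul]
    have e1 : (((Finset.Icc 1 N).filter bad).card : ℝ) * (2 * M) ≤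
        (k * natCount Z (N + k) : ℝ) * (2 * M) := by
      apply mul_le_mul_of_nonneg_right _ (by linarith)
      exact_mod_cast c1
    have e2 : (((Finset.Icc 1 N).filter (fun n => ¬ bad n)).card : ℝ) * ε' ≤ (N:ℝ) * ε' := by
      apply mul_le_mul_of_nonneg_right _ hε'.le
      exact_mod_cast c2
    push_cast at e1 ⊢
    linarith
  have hnorm : ‖(N : ℝ)⁻¹ * ∑ n ∈ Finset.Icc 1 N, (f (shift^[n] x') - f (shift^[n] x))‖ =
      (N:ℝ)⁻¹ * |∑ n ∈ Finset.Icc 1 N, (f (shift^[n] x') - f (shift^[n] x))| := by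
    rw [Real.norm_eq_abs, abs_mul, abs_inv, abs_of_pos hN0]
  rw [hnorm]
  have key : (N:ℝ)⁻¹ * (2 * M * (k * natCount Z (N + k)) + N * ε') =
      2 * M * k * ((natCount Z (N + k) : ℝ) / N) + ε' := by
    field_simp
  have : (N:ℝ)⁻¹ * |∑ n ∈ Finset.Icc 1 N, (f (shift^[n] x') - f (shift^[n] x))| ≤
      2 * M * k * ((natCount Z (N + k) : ℝ) / N) + ε' := by
    rw [← key]
    exact mul_le_mul_of_nonneg_left hsum (by positivity)
  have hfin : 2 * M * k * ((natCount Z (N + k) : ℝ) / N) + ε' < ε := by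
    have : ε' + ε' ≤ ε / 2 := by rw [hε'def]; linarith
    linarith
  linarith

-- genericity transfer
lemma generic_transfer (A Z : Set ℕ) (hZ : HasDensity Z 0) (μ : Measure Omega)
    (hgen : ∀ f : C(Omega, ℝ), Tendsto
      (fun N : ℕ => (N : ℝ)⁻¹ * ∑ n ∈ Finset.Icc 1 N, f (shift^[n] (indSeq A)))
      atTop (nhds (∫ x, f x ∂μ)))
    (f : C(Omega, ℝ)) : Tendsto
      (fun N : ℕ => (N : ℝ)⁻¹ * ∑ n ∈ Finset.Icc 1 N, f (shift^[n] (indSeq (A \ Z))))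
      atTop (nhds (∫ x, f x ∂μ)) := by
  have h := (avg_diff A Z hZ f).add (hgen f)
  rw [zero_add] at h
  refine h.congr fun N => ?_
  rw [← mul_add, ← Finset.sum_add_distrib]
  simp [sub_add_cancel]

-- support of generic measure
lemma support_lemma (B : Set ℕ) (μ : Measure Omega) [IsProbabilityMeasure μ]
    (hgen : ∀ f : C(Omega, ℝ), Tendsto
      (fun N : ℕ => (N : ℝ)⁻¹ * ∑ n ∈ Finset.Icc 1 N, f (shift^[n] (indSeq B)))
      atTop (nhds (∫ x, f x ∂μ))) :
    μ (orbitClosure B) = 1 := by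
  set K : Set Omega := orbitClosure B with hKdef
  have hKclosed : IsClosed K := isClosed_closure
  have horbit : ∀ n : ℕ, shift^[n] (indSeq B) ∈ K := fun n => subset_closure ⟨n, rfl⟩
  have hzero : ∀ F : Set Omega, IsClosed F → F ⊆ Kᶜ → μ F = 0 := by
    intro F hF hFK
    have hdisj : Disjoint K F := Set.disjoint_left.mpr fun a haK haF => hFK haF haK
    obtain ⟨g, hg0, hg1, hg01⟩ := exists_continuous_zero_one_of_isClosed hKclosed hF hdisj
    have hgzero : ∀ n : ℕ, g (shift^[n] (indSeq B)) = 0 := by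
      intro n
      have := hg0 (horbit n)
      simpa using this
    have hint0 : ∫ x, g x ∂μ = 0 := by
      have hgen' := hgen g
      have : Tendsto (fun _ : ℕ => (0:ℝ)) atTop (nhds (∫ x, g x ∂μ)) := by
        refine hgen'.congr fun N => ?_
        simp [hgzero]
      exact tendsto_nhds_unique this tendsto_const_nhds
    have hintg : Integrable g μ :=
      g.continuous.integrable_of_hasCompactSupport (HasCompactSupport.of_compactSpace g)
    have hFle : (μ F).toReal ≤ ∫ x, g x ∂μ := by
      have hmeas : MeasurableSet F := hF.measurableSet
      have : (μ F).toReal = ∫ x, Set.indicator F (fun _ => (1:ℝ)) x ∂μ := by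
        rw [MeasureTheory.integral_indicator_const (1:ℝ) hmeas]
        simp
        rfl
      rw [this]
      refine MeasureTheory.integral_mono ((integrable_const (1:ℝ)).indicator hmeas) hintg ?_
      intro y
      by_cases hy : y ∈ F
      · have h1 := hg1 hy
        simp only [Pi.one_apply] at h1
        simp [Set.indicator_of_mem hy, h1]
      · simp only [Set.indicator_of_notMem hy]
        exact (hg01 y).1
    rw [hint0] at hFle
    have h1 : (μ F).toReal = 0 := le_antisymm hFle ENNReal.toReal_nonneg
    rw [ENNReal.toReal_eq_zero_iff] at h1
    rcases h1 with h | h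
    · exact h
    · exact absurd h (measure_ne_top μ F)
  have hcompl : μ Kᶜ = 0 := by
    by_contra hne
    have hpos : 0 < μ Kᶜ := pos_iff_ne_zero.2 hne
    obtain ⟨F, hFsub, hFclosed, hFpos⟩ := hKclosed.isOpen_compl.exists_lt_isClosed hpos
    exact absurd (hzero F hFclosed hFsub) (by exact fun h => by simp [h] at hFpos)
  have := measure_add_measure_compl (μ := μ) hKclosed.measurableSet
  rw [hcompl, add_zero] at this
  rw [this]
  exact measure_univ

lemma density_part (A Z : Set ℕ) (hA : 0 < upperDensity A) (hZ : HasDensity Z 0) :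
    0 < upperDensity (A \ Z) := by
  set u : ℕ → ℝ := fun N => (natCount A N : ℝ) / N
  set v : ℕ → ℝ := fun N => (natCount (A \ Z) N : ℝ) / N
  have hv0 : ∀ N, 0 ≤ v N := fun N => by positivity
  have hv1 : ∀ N, v N ≤ 1 := by
    intro N
    rcases Nat.eq_zero_or_pos N with h | h
    · simp [v, h]
    · have hN : (0:ℝ) < N := by exact_mod_cast h
      rw [div_le_one hN]
      exact_mod_cast natCount_le (A \ Z) N
  have key : ∀ ε : ℝ, 0 < ε → upperDensity A ≤ upperDensity (A \ Z) + ε := by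
    intro ε hε
    have hev : ∀ᶠ N in atTop, u N ≤ v N + ε := by
      have hzev : ∀ᶠ N in atTop, (natCount Z N : ℝ) / N < ε := hZ.eventually_lt_const hε
      filter_upwards [hzev, eventually_ge_atTop 1] with N hz hN1
      have hN : (0:ℝ) < N := by exact_mod_cast hN1
      have htri : (natCount A N : ℝ) ≤ (natCount (A \ Z) N : ℝ) + (natCount Z N : ℝ) := by
        exact_mod_cast natCount_tri A Z N
      have : u N ≤ v N + (natCount Z N : ℝ) / N := by
        show (natCount A N : ℝ) / N ≤ (natCount (A \ Z) N : ℝ) / N + (natCount Z N : ℝ) / N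
        rw [← add_div]
        exact div_le_div_of_nonneg_right htri hN.le
      linarith
    have h1 : Filter.limsup u atTop ≤ Filter.limsup (fun N => v N + ε) atTop := by
      refine Filter.limsup_le_limsup hev ?_ ?_
      · refine Filter.IsBoundedUnder.isCoboundedUnder_le ?_
        exact ⟨0, Filter.eventually_map.2 (Filter.Eventually.of_forall (fun N => by positivity))⟩
      · exact ⟨1 + ε, Filter.eventually_map.2 (Filter.Eventually.of_forall
          (fun N => by have := hv1 N; linarith))⟩
    have h2 : Filter.limsup (fun N => v N + ε) atTop = Filter.limsup v atTop + ε := by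
      refine _root_.limsup_add_const atTop v ε ?_ ?_
      · exact ⟨1, Filter.eventually_map.2 (Filter.Eventually.of_forall hv1)⟩
      · refine Filter.IsBoundedUnder.isCoboundedUnder_le ?_
        exact ⟨0, Filter.eventually_map.2 (Filter.Eventually.of_forall hv0)⟩
    calc upperDensity A = Filter.limsup u atTop := rfl
      _ ≤ Filter.limsup (fun N => v N + ε) atTop := h1
      _ = upperDensity (A \ Z) + ε := h2
  by_contra hle
  push_neg at hle
  have := key (upperDensity A / 2) (by linarith)
  linarith

end Helpers

/-- Removing a density-zero set from a weakly mixing set yields a weakly mixing set. -/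
theorem stmt14 (A Z : Set ℕ) (hA : WeaklyMixingSet A) (hZ : HasDensity Z 0) :
    WeaklyMixingSet (A \ Z) := by
  obtain ⟨hd, μ, hprob, hmp, hsupp, herg, hgen, hwm⟩ := hA
  haveI := hprob
  refine ⟨density_part A Z hd hZ, μ, hprob, hmp, ?_, herg, ?_, hwm⟩
  · exact support_lemma (A \ Z) μ (generic_transfer A Z hZ μ hgen)
  · exact generic_transfer A Z hZ μ hgen
end
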